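/- Let F be a field. In K_2(2,F), for all t,v∈F^* and every integer m we have {t^{2m},v}={t²,v}^m. -/

import Mathlib

/-!
Common definitions: presentations of the abelian groups `K₂(F)`, `K₂(2,F)` and `K₂(A,F)`
(Rehmann–Morita).  "The abelian group generated by symbols subject to relations" is
formalized as the abelianization of the corresponding presented group.
-/

variable (F : Type) [Field F]

/-- Relators for `K₂(F)`: the Steinberg symbol relations (A1)-(A3).
(A3) `{u, 1-u} = 1` (for `u ≠ 1`) is encoded as: for units `u, w` with `(w : F) = 1 - u`
(which forces `u ≠ 1`), `{u, w}` is a relator. -/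
def K2Rels : Set (FreeGroup (Fˣ × Fˣ)) :=
  {r | (∃ t u v : Fˣ, r = FreeGroup.of (t * u, v) * (FreeGroup.of (t, v) * FreeGroup.of (u, v))⁻¹) ∨
       (∃ t u v : Fˣ, r = FreeGroup.of (t, u * v) * (FreeGroup.of (t, u) * FreeGroup.of (t, v))⁻¹) ∨
       (∃ u w : Fˣ, (w : F) = 1 - (u : F) ∧ r = FreeGroup.of (u, w))}

/-- `K₂(F)`: the abelian group generated by the symbols `{u,v}`, `u v ∈ Fˣ`,
subject to the Steinberg symbol relations (A1)-(A3). -/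
def K2 : Type := Abelianization (PresentedGroup (K2Rels F))

noncomputable instance : CommGroup (K2 F) := inferInstanceAs (CommGroup (Abelianization _))

/-- The Steinberg symbol `{u,v}` in `K₂(F)`. -/
def K2.sym (u v : Fˣ) : K2 F := Abelianization.of (PresentedGroup.of (u, v))

/-- The subgroup `m·K₂(F)` of `m`-th powers of elements of `K₂(F)`. -/
noncomputable def K2.powSubgroup (m : ℕ) : Subgroup (K2 F) := Subgroup.closure {x | ∃ y : K2 F, x = y ^ m}

/-- Relators for `K₂(2,F)`: the Steinberg cocycle relations (B1)-(B4). -/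
def K2SLRels : Set (FreeGroup (Fˣ × Fˣ)) :=
  {r | (∃ t u v : Fˣ, r = FreeGroup.of (t, u) * FreeGroup.of (t * u, v) *
          (FreeGroup.of (t, u * v) * FreeGroup.of (u, v))⁻¹) ∨
       (r = FreeGroup.of ((1 : Fˣ), (1 : Fˣ))) ∨
       (∃ u v : Fˣ, r = FreeGroup.of (u, v) * (FreeGroup.of (u⁻¹, v⁻¹))⁻¹) ∨
       (∃ u v w : Fˣ, (w : F) = 1 - (u : F) ∧
          r = FreeGroup.of (u, v) * (FreeGroup.of (u, w * v))⁻¹)}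

/-- `K₂(2,F)`: the abelian group generated by the symbols `{u,v}`, `u v ∈ Fˣ`,
subject to the Steinberg cocycle relations (B1)-(B4). -/
def K2SL : Type := Abelianization (PresentedGroup (K2SLRels F))

noncomputable instance : CommGroup (K2SL F) := inferInstanceAs (CommGroup (Abelianization _))

/-- The Steinberg cocycle `{u,v}` in `K₂(2,F)`. -/
def K2SL.sym (u v : Fˣ) : K2SL F := Abelianization.of (PresentedGroup.of (u, v))

/-- The subgroup `m⟨{u²,v}⟩` of `K₂(2,F)` generated by the elements `{u²,v}^m`, `u v ∈ Fˣ`. -/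
noncomputable def K2SL.sqSubgroup (m : ℤ) : Subgroup (K2SL F) :=
  Subgroup.closure {x | ∃ u v : Fˣ, x = (K2SL.sym F (u ^ 2) v) ^ m}

/-- A generalized Cartan matrix: `a_{ii} = 2`, off-diagonal entries `≤ 0`,
and `a_{ij} = 0 ↔ a_{ji} = 0`. -/
def IsGCM {n : ℕ} (A : Matrix (Fin n) (Fin n) ℤ) : Prop :=
  (∀ i, A i i = 2) ∧ (∀ i j, i ≠ j → A i j ≤ 0) ∧ (∀ i j, A i j = 0 ↔ A j i = 0)

/-- Relators for `K₂(A,F)`: the Rehmann–Morita relations (L1)-(L7). -/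
def K2ARels {n : ℕ} (A : Matrix (Fin n) (Fin n) ℤ) : Set (FreeGroup (Fin n × Fˣ × Fˣ)) :=
  {r | (∃ (i : Fin n) (t u v : Fˣ),
          r = FreeGroup.of (i, t, u) * FreeGroup.of (i, t * u, v) *
              (FreeGroup.of (i, t, u * v) * FreeGroup.of (i, u, v))⁻¹) ∨
       (∃ i : Fin n, r = FreeGroup.of (i, 1, 1)) ∨
       (∃ (i : Fin n) (u v : Fˣ),
          r = FreeGroup.of (i, u, v) * (FreeGroup.of (i, u⁻¹, v⁻¹))⁻¹) ∨
       (∃ (i : Fin n) (u v w : Fˣ), (w : F) = 1 - (u : F) ∧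
          r = FreeGroup.of (i, u, v) * (FreeGroup.of (i, u, w * v))⁻¹) ∨
       (∃ (i j : Fin n) (u v : Fˣ), i ≠ j ∧
          r = FreeGroup.of (i, u, v ^ (A j i)) * (FreeGroup.of (j, u ^ (A i j), v))⁻¹) ∨
       (∃ (i j : Fin n) (t u v : Fˣ), i ≠ j ∧
          r = FreeGroup.of (i, t * u, v ^ (A j i)) *
              (FreeGroup.of (i, t, v ^ (A j i)) * FreeGroup.of (i, u, v ^ (A j i)))⁻¹) ∨
       (∃ (i j : Fin n) (t u v : Fˣ), i ≠ j ∧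
          r = FreeGroup.of (i, t ^ (A j i), u * v) *
              (FreeGroup.of (i, t ^ (A j i), u) * FreeGroup.of (i, t ^ (A j i), v))⁻¹)}

/-- `K₂(A,F)`: the abelian group generated by the symbols `c_i(u,v)` subject to (L1)-(L7). -/
def K2A {n : ℕ} (A : Matrix (Fin n) (Fin n) ℤ) : Type :=
  Abelianization (PresentedGroup (K2ARels F A))

noncomputable instance {n : ℕ} (A : Matrix (Fin n) (Fin n) ℤ) : CommGroup (K2A F A) :=
  inferInstanceAs (CommGroup (Abelianization _))

/-- The generator `c_i(u,v)` of `K₂(A,F)`. -/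
def K2A.c {n : ℕ} (A : Matrix (Fin n) (Fin n) ℤ) (i : Fin n) (u v : Fˣ) : K2A F A :=
  Abelianization.of (PresentedGroup.of (i, u, v))

open scoped Classical in
/-- `LGroup F p` is `K₂(F)` when `p` holds and `K₂(2,F)` otherwise.  Taking
`p = "the i-th column of A has an odd entry"` gives the factor `L_i`. -/
noncomputable def LGroup (p : Prop) : Type :=
  Abelianization (PresentedGroup (if p then K2Rels F else K2SLRels F))

noncomputable instance (p : Prop) : CommGroup (LGroup F p) :=
  inferInstanceAs (CommGroup (Abelianization _))

/-- The symbol `{u,v}` (Steinberg symbol resp. cocycle) in `LGroup F p`. -/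
noncomputable def LGroup.sym (p : Prop) (u v : Fˣ) : LGroup F p :=
  Abelianization.of (PresentedGroup.of (u, v))

/-- Relators `x_i^{a_{ji}} = x_j^{a_{ij}}` (`i < j`) for the auxiliary abelian group `G`. -/
def GRels {n : ℕ} (A : Matrix (Fin n) (Fin n) ℤ) : Set (FreeGroup (Fin n)) :=
  {r | ∃ i j : Fin n, i < j ∧ r = FreeGroup.of i ^ (A j i) * (FreeGroup.of j ^ (A i j))⁻¹}

/-- The abelian group `G = ⟨x_1,…,x_n ∣ x_i^{a_{ji}} = x_j^{a_{ij}}, [x_i,x_j] = 1⟩`. -/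
def GGroup {n : ℕ} (A : Matrix (Fin n) (Fin n) ℤ) : Type :=
  Abelianization (PresentedGroup (GRels A))

noncomputable instance {n : ℕ} (A : Matrix (Fin n) (Fin n) ℤ) : CommGroup (GGroup A) :=
  inferInstanceAs (CommGroup (Abelianization _))

section K2SLProof

variable (F : Type) [Field F]

/-- The canonical projection from the free group to `K₂(2,F)`. -/
noncomputable def K2SLpi : FreeGroup (Fˣ × Fˣ) →* K2SL F :=
  MonoidHom.comp Abelianization.of (QuotientGroup.mk' (Subgroup.normalClosure (K2SLRels F)))

lemma K2SLpi_of (u v : Fˣ) : K2SLpi F (FreeGroup.of (u, v)) = K2SL.sym F u v := rfl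

lemma K2SLpi_rel {r : FreeGroup (Fˣ × Fˣ)} (hr : r ∈ K2SLRels F) : K2SLpi F r = 1 := by
  have h : QuotientGroup.mk' (Subgroup.normalClosure (K2SLRels F)) r = 1 := by
    rw [QuotientGroup.mk'_apply, QuotientGroup.eq_one_iff]
    exact Subgroup.subset_normalClosure hr
  exact (congrArg (⇑(Abelianization.of : PresentedGroup (K2SLRels F) →* K2SL F)) h).trans
    (map_one _)

/-- The symbol, viewed additively. -/
noncomputable def aa (u v : Fˣ) : Additive (K2SL F) := Additive.ofMul (K2SL.sym F u v)

lemma aB1 (t u v : Fˣ) : aa F t u + aa F (t * u) v = aa F t (u * v) + aa F u v := by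
  have h := K2SLpi_rel F (show _ ∈ K2SLRels F from Or.inl ⟨t, u, v, rfl⟩)
  rw [map_mul, map_mul, map_inv, map_mul, K2SLpi_of, K2SLpi_of, K2SLpi_of, K2SLpi_of,
    mul_inv_eq_one] at h
  simpa only [aa, ← ofMul_mul] using congrArg (⇑Additive.ofMul) h

lemma aB2 : aa F 1 1 = 0 := by
  have h := K2SLpi_rel F (show _ ∈ K2SLRels F from Or.inr (Or.inl rfl))
  rw [K2SLpi_of] at h
  simpa only [aa, ofMul_one] using congrArg (⇑Additive.ofMul) h

lemma aB3 (u v : Fˣ) : aa F u v = aa F u⁻¹ v⁻¹ := by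
  have h := K2SLpi_rel F (show _ ∈ K2SLRels F from Or.inr (Or.inr (Or.inl ⟨u, v, rfl⟩)))
  rw [map_mul, map_inv, K2SLpi_of, K2SLpi_of, mul_inv_eq_one] at h
  simpa only [aa] using congrArg (⇑Additive.ofMul) h

lemma aB4 (u v w : Fˣ) (hw : (w : F) = 1 - (u : F)) : aa F u v = aa F u (w * v) := by
  have h := K2SLpi_rel F (show _ ∈ K2SLRels F from Or.inr (Or.inr (Or.inr ⟨u, v, w, hw, rfl⟩)))
  rw [map_mul, map_inv, K2SLpi_of, K2SLpi_of, mul_inv_eq_one] at h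
  simpa only [aa] using congrArg (⇑Additive.ofMul) h

lemma aone_right (t v : Fˣ) : aa F t 1 = aa F 1 v := by
  have h := aB1 F t 1 v
  rw [mul_one, one_mul] at h
  have h2 : aa F t 1 + aa F t v = aa F 1 v + aa F t v := by rw [h]; abel
  exact add_right_cancel h2

lemma aone_left (v : Fˣ) : aa F 1 v = 0 := (aone_right F 1 v).symm.trans (aB2 F)

lemma aone_right' (t : Fˣ) : aa F t 1 = 0 := (aone_right F t 1).trans (aone_left F 1)

/-- (P1): `c(u,v) = c(u, -u·v)`. -/
lemma aP1 (u v : Fˣ) : aa F u v = aa F u (-u * v) := by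
  rcases eq_or_ne u 1 with rfl | hu
  · rw [aone_left, aone_left]
  · have hcoe : (u : F) ≠ 1 := fun h => hu (Units.ext (by rw [h, Units.val_one]))
    have h1 : (1 : F) - (u : F) ≠ 0 := sub_ne_zero.mpr (Ne.symm hcoe)
    have hinv : (u : F)⁻¹ ≠ 1 := by
      rw [ne_eq, inv_eq_one]; exact hcoe
    have h2 : (1 : F) - (u : F)⁻¹ ≠ 0 := sub_ne_zero.mpr (Ne.symm hinv)
    set w1 : Fˣ := Units.mk0 ((1 : F) - (u : F)) h1 with hw1
    set w2 : Fˣ := Units.mk0 ((1 : F) - (u : F)⁻¹) h2 with hw2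
    have s1 : aa F u v = aa F u⁻¹ v⁻¹ := aB3 F u v
    have s2 : aa F u⁻¹ v⁻¹ = aa F u⁻¹ (w2 * v⁻¹) := by
      refine aB4 F u⁻¹ v⁻¹ w2 ?_
      simp [hw2]
    have s3 : aa F u (w2⁻¹ * v) = aa F u⁻¹ (w2 * v⁻¹) := by
      have := aB3 F u (w2⁻¹ * v)
      rwa [mul_inv, inv_inv] at this
    have s4 : aa F u (w2⁻¹ * v) = aa F u (w1 * (w2⁻¹ * v)) := by
      refine aB4 F u _ w1 ?_
      simp [hw1]
    have huv : w1 * (w2⁻¹ * v) = -u * v := by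
      rw [← mul_assoc]
      congr 1
      apply Units.ext
      rw [Units.val_mul, Units.val_neg, Units.val_inv_eq_inv_val]
      simp only [hw1, hw2, Units.val_mk0]
      have key : (1 : F) - (u : F) = -(u : F) * ((1 : F) - (u : F)⁻¹) := by
        field_simp
        ring
      rw [key, mul_assoc, mul_inv_cancel₀ h2, mul_one]
    rw [s1, s2, ← s3, s4, huv]

/-- (P1'): `c(u, u·v) = c(u, -v)`. -/
lemma aP1' (u v : Fˣ) : aa F u (u * v) = aa F u (-v) := by
  have h := aP1 F u (-v)
  rw [neg_mul_neg] at h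
  exact h.symm

/-- `c(u,u) = c(u,-1)`. -/
lemma aκ (u : Fˣ) : aa F u u = aa F u (-1) := by
  have h := aP1' F u 1
  rwa [mul_one] at h

/-- (B3'): `c(u⁻¹, v) = c(u, v⁻¹)`. -/
lemma aB3' (u v : Fˣ) : aa F u⁻¹ v = aa F u v⁻¹ := by
  have h := aB3 F u⁻¹ v
  rwa [inv_inv] at h

/-- (A): `c(x, xv) + c(x, v⁻¹) = c(x, -1)`. -/
lemma aA (x v : Fˣ) : aa F x (x * v) + aa F x v⁻¹ = aa F x (-1) := by
  have p4 := aB1 F x⁻¹ x v⁻¹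
  rw [inv_mul_cancel, aone_left, add_zero] at p4
  -- p4 : aa x⁻¹ x = aa x⁻¹ (x * v⁻¹) + aa x v⁻¹
  have h1 : aa F x⁻¹ (x * v⁻¹) = aa F x (x * v) := by
    have e1 : aa F x (x⁻¹ * v) = aa F x⁻¹ (x * v⁻¹) := by
      have e := aB3 F x (x⁻¹ * v)
      rwa [mul_inv, inv_inv] at e
    have e2 : aa F x (x⁻¹ * v) = aa F x (-v) := by
      have e := aP1 F x (x⁻¹ * v)
      have harg : -x * (x⁻¹ * v) = -v := by
        rw [← mul_assoc, neg_mul, mul_inv_cancel, neg_mul, one_mul]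
      rwa [harg] at e
    exact e1.symm.trans (e2.trans (aP1' F x v).symm)
  have h2 : aa F x⁻¹ x = aa F x (-1) := by
    have e2 : aa F x x⁻¹ = aa F x (-1) := by
      have e := aP1 F x x⁻¹
      have harg : -x * x⁻¹ = (-1 : Fˣ) := by
        rw [neg_mul, mul_inv_cancel]
      rwa [harg] at e
    exact (aB3' F x x).trans e2
  rw [h1, h2] at p4
  exact p4.symm

/-- `c(x², v) = c(x, xv) + c(x, v) - c(x, x)`. -/
lemma asq (x v : Fˣ) : aa F (x ^ 2) v = aa F x (x * v) + aa F x v - aa F x x := by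
  rw [pow_two, eq_sub_iff_add_eq, add_comm]
  exact aB1 F x x v

/-- (R''): `c(x², v) + c(x², v⁻¹) = 0`. -/
lemma aR'' (x v : Fˣ) : aa F (x ^ 2) v + aa F (x ^ 2) v⁻¹ = 0 := by
  rw [asq F x v, asq F x v⁻¹]
  have hA := aA F x v
  have hA2 : aa F x (x * v⁻¹) + aa F x v = aa F x (-1) := by
    have := aA F x v⁻¹
    rwa [inv_inv] at this
  have hκ := aκ F x
  calc (aa F x (x * v) + aa F x v - aa F x x) + (aa F x (x * v⁻¹) + aa F x v⁻¹ - aa F x x)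
      = (aa F x (x * v) + aa F x v⁻¹) + (aa F x (x * v⁻¹) + aa F x v) - aa F x x - aa F x x := by
        abel
    _ = aa F x (-1) + aa F x (-1) - aa F x (-1) - aa F x (-1) := by rw [hA, hA2, hκ]
    _ = 0 := by abel

/-- (T): `c(x², x²v) = c(x², x²) + c(x², v)`. -/
lemma aT (x v : Fˣ) : aa F (x ^ 2) (x ^ 2 * v) = aa F (x ^ 2) (x ^ 2) + aa F (x ^ 2) v := by
  have hA := aA F (x ^ 2) v
  have hR := aR'' F x v
  have hκ := aκ F (x ^ 2)
  have hinv : aa F (x ^ 2) v⁻¹ = -aa F (x ^ 2) v := by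
    rw [eq_neg_iff_add_eq_zero, add_comm]
    exact hR
  calc aa F (x ^ 2) (x ^ 2 * v) = aa F (x ^ 2) (-1) - aa F (x ^ 2) v⁻¹ := eq_sub_of_add_eq hA
    _ = aa F (x ^ 2) (x ^ 2) + aa F (x ^ 2) v := by
        rw [hinv, sub_neg_eq_add, hκ]

/-- Main induction: `c(t^{2k}, v) = k·c(t², v)` for naturals. -/
lemma akey (t : Fˣ) : ∀ (k : ℕ) (v : Fˣ), aa F (t ^ (2 * k)) v = (k : ℤ) • aa F (t ^ 2) v := by
  intro k
  induction k with
  | zero => intro v; simp [aone_left]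
  | succ k ih =>
    intro v
    have hB := aB1 F (t ^ (2 * k)) (t ^ 2) v
    have hp : t ^ (2 * k) * t ^ 2 = t ^ (2 * (k + 1)) := by
      rw [← pow_add]
      ring_nf
    rw [hp, ih, ih, aT F t v] at hB
    -- hB : k • aa t² t² + aa (t^{2(k+1)}) v = k • (aa t² t² + aa t² v) + aa t² v
    have h2 : aa F (t ^ (2 * (k + 1))) v
        = (k : ℤ) • (aa F (t ^ 2) (t ^ 2) + aa F (t ^ 2) v) + aa F (t ^ 2) v
          - (k : ℤ) • aa F (t ^ 2) (t ^ 2) := by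
      rw [← hB]; abel
    rw [h2]
    push_cast
    module

end K2SLProof

/-- In `K₂(2,F)`, `{t^{2m}, v} = {t², v}^m` for every integer `m`. -/
theorem K2SL.sym_even_pow (F : Type) [Field F] (t v : Fˣ) (m : ℤ) :
    K2SL.sym F (t ^ (2 * m)) v = (K2SL.sym F (t ^ 2) v) ^ m := by
  have main : aa F (t ^ (2 * m)) v = m • aa F (t ^ 2) v := by
    obtain ⟨k, rfl | rfl⟩ := Int.eq_nat_or_neg m
    · have hp : t ^ ((k : ℤ) * 2) = t ^ (2 * k) := by
        rw [show (k : ℤ) * 2 = ((2 * k : ℕ) : ℤ) by push_cast; ring, zpow_natCast]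
      rw [mul_comm (2 : ℤ), hp, akey F t k v]
    · have hp : t ^ ((2 : ℤ) * (-(k : ℤ))) = (t ^ (2 * k))⁻¹ := by
        rw [mul_neg, zpow_neg, show (2 : ℤ) * (k : ℤ) = ((2 * k : ℕ) : ℤ) by push_cast; ring,
          zpow_natCast]
      rw [hp, show aa F (t ^ (2 * k))⁻¹ v = aa F (t ^ (2 * k)) v⁻¹ from aB3' F _ v,
        akey F t k v⁻¹]
      have hinv : aa F (t ^ 2) v⁻¹ = -aa F (t ^ 2) v := by
        rw [eq_neg_iff_add_eq_zero, add_comm]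
        exact aR'' F t v
      rw [hinv, smul_neg, ← neg_smul]
  have h2 : Additive.ofMul (K2SL.sym F (t ^ (2 * m)) v)
      = Additive.ofMul ((K2SL.sym F (t ^ 2) v) ^ m) := by
    rw [ofMul_zpow]
    exact main
  exact Additive.ofMul.injective h2
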